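/- Let 𝒢 be a transitive subgroup of S₅. Then the first group cohomology H¹(𝒢, G) vanishes. -/

import Mathlib

open Equiv

/-- The zero-sum submodule `G ⊆ (𝔽₂)⁵`. -/
def Gsub : Submodule (ZMod 2) (Fin 5 → ZMod 2) where
  carrier := {v | ∑ i, v i = 0}
  add_mem' := by
    intro a b ha hb
    simp only [Set.mem_setOf_eq] at *
    simp [Finset.sum_add_distrib, ha, hb]
  zero_mem' := by simp
  smul_mem' := by
    intro c a ha
    simp only [Set.mem_setOf_eq] at *
    simp [← Finset.mul_sum, ha]

theorem Equiv.Perm.inv_apply_self {α : Type*} (f : Perm α) (x : α) : f⁻¹ (f x) = x :=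
  f.symm_apply_apply x

theorem Equiv.Perm.apply_inv_self {α : Type*} (f : Perm α) (x : α) : f (f⁻¹ x) = x :=
  f.apply_symm_apply x

set_option maxRecDepth 40000 in
private theorem D1' : ∀ h : Perm (Fin 5), h 0 = 0 → h^3 = 1 ∨ h^2 = 1 ∨ (h^4 = 1 ∧ h^2 ≠ 1) := by
  decide

set_option maxRecDepth 40000 in
private theorem D2' : ∀ h : Perm (Fin 5), h 0 = 0 → h^2 = 1 → h ≠ 1 →
    (∃ p a : Fin 5, p ≠ 0 ∧ h p ≠ 0 ∧ a ≠ 0 ∧ h a ≠ 0 ∧ p ≠ h p ∧ a ≠ h a ∧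
      a ≠ p ∧ a ≠ h p ∧ h a ≠ p ∧ h a ≠ h p) ∨
    (∃ i j k l : Fin 5, i ≠ 0 ∧ j ≠ 0 ∧ k ≠ 0 ∧ l ≠ 0 ∧ i ≠ j ∧ i ≠ k ∧ i ≠ l ∧ j ≠ k ∧ j ≠ l ∧
      k ≠ l ∧ h = Equiv.swap i j ∧ h k = k ∧ h l = l) := by decide

set_option maxRecDepth 40000 in
private theorem D3' : ∀ h : Perm (Fin 5), h 0 = 0 → h^4 = 1 → h^2 ≠ 1 →
    ∃ p : Fin 5, p ≠ 0 ∧ h p ≠ 0 ∧ h (h p) ≠ 0 ∧ h (h (h p)) ≠ 0 ∧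
      p ≠ h p ∧ p ≠ h (h p) ∧ p ≠ h (h (h p)) ∧ h p ≠ h (h p) ∧ h p ≠ h (h (h p)) ∧
      h (h p) ≠ h (h (h p)) := by decide

private theorem S5d {M : Type*} [AddCommMonoid M] (F : Fin 5 → M) (a b c d e : Fin 5)
    (hab : a ≠ b) (hac : a ≠ c) (had : a ≠ d) (hae : a ≠ e) (hbc : b ≠ c) (hbd : b ≠ d)
    (hbe : b ≠ e) (hcd : c ≠ d) (hce : c ≠ e) (hde : d ≠ e) :
    ∑ j, F j = F a + F b + F c + F d + F e := by
  have hinj : Function.Injective (![a,b,c,d,e] : Fin 5 → Fin 5) := by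
    intro i j hij
    fin_cases i <;> fin_cases j <;> simp_all
  have hbij := hinj.bijective_of_finite
  rw [← Fintype.sum_bijective _ hbij (fun i => F (![a,b,c,d,e] i)) F (fun x => rfl)]
  simp [Fin.sum_univ_five]

private theorem div5 (𝒢 : Subgroup (Perm (Fin 5))) (htrans : ∀ i j : Fin 5, ∃ π ∈ 𝒢, π i = j) :
    (5 : ℕ) ∣ Nat.card 𝒢 := by
  classical
  have horb : MulAction.orbit 𝒢 (0 : Fin 5) = Set.univ := by
    apply Set.eq_univ_of_forall
    intro j
    obtain ⟨π, hπ, hπ0⟩ := htrans 0 j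
    exact ⟨⟨π, hπ⟩, hπ0⟩
  haveI : Fintype 𝒢 := Fintype.ofFinite _
  haveI : Fintype (MulAction.orbit 𝒢 (0 : Fin 5)) := Fintype.ofFinite _
  have hcard := MulAction.card_orbit_mul_card_stabilizer_eq_card_group 𝒢 (0 : Fin 5)
  have h5 : Fintype.card (MulAction.orbit 𝒢 (0 : Fin 5)) = 5 := by
    have := Nat.card_congr (Equiv.setCongr horb)
    simpa [Nat.card_eq_fintype_card] using this
  rw [h5] at hcard
  rw [Nat.card_eq_fintype_card]
  exact ⟨_, hcard.symm⟩

theorem stmt2 (𝒢 : Subgroup (Equiv.Perm (Fin 5)))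
    (htrans : ∀ i j : Fin 5, ∃ π ∈ 𝒢, π i = j)
    (f : 𝒢 → (Fin 5 → ZMod 2))
    (hmem : ∀ g, f g ∈ Gsub)
    (hcoc : ∀ g h : 𝒢, f (g * h) = f g + fun j => f h ((g : Equiv.Perm (Fin 5))⁻¹ j)) :
    ∃ x ∈ Gsub, ∀ g : 𝒢, f g = (fun j => x ((g : Equiv.Perm (Fin 5))⁻¹ j)) - x := by
  classical
  have h2 : ∀ a : ZMod 2, a + a = 0 := by decide
  have hsub2 : ∀ a b : ZMod 2, a - b = a + b := by decide
  -- coset representatives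
  have hrep : ∀ j : Fin 5, ∃ s : 𝒢, (s : Perm (Fin 5)) 0 = j := by
    intro j
    obtain ⟨π, hπ, h0⟩ := htrans 0 j
    exact ⟨⟨π, hπ⟩, h0⟩
  choose σ0 hσ00 using hrep
  set σ : Fin 5 → 𝒢 := Function.update σ0 0 1 with hσdef
  have hσ : ∀ j, (σ j : Perm (Fin 5)) 0 = j := by
    intro j
    by_cases hj : j = 0
    · subst hj; simp [σ]
    · simp [σ, Function.update_of_ne hj, hσ00]
  have hσzero : σ 0 = 1 := by simp [σ]
  have hσinv : ∀ j, ((σ j : Perm (Fin 5)))⁻¹ j = 0 := by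
    intro j
    rw [Perm.inv_eq_iff_eq]
    exact (hσ j).symm
  -- notation
  set χ : 𝒢 → ZMod 2 := fun g => f g 0 with hχdef
  set x : Fin 5 → ZMod 2 := fun j => f (σ j) j with hxdef
  -- f 1 = 0
  have hf1 : f (1 : 𝒢) = 0 := by
    have h := hcoc 1 1
    rw [mul_one] at h
    funext j
    have := congrFun h j
    simp only [Pi.add_apply] at this
    have h1inv : (((1 : 𝒢) : Perm (Fin 5)))⁻¹ j = j := by simp
    rw [h1inv] at this
    have := left_eq_add.mp this
    simpa using this
  -- additivity of χ on 0-fixers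
  have hadd : ∀ g h : 𝒢, (g : Perm (Fin 5)) 0 = 0 → χ (g * h) = χ g + χ h := by
    intro g h hg
    have hc := congrFun (hcoc g h) 0
    simp only [Pi.add_apply] at hc
    have hginv : ((g : Perm (Fin 5)))⁻¹ 0 = 0 := by
      conv_lhs => rw [← hg]
      rw [Perm.inv_apply_self]
    rw [hginv] at hc
    exact hc
  have hmulfix : ∀ g h : 𝒢, (g : Perm (Fin 5)) 0 = 0 → (h : Perm (Fin 5)) 0 = 0 →
      ((g * h : 𝒢) : Perm (Fin 5)) 0 = 0 := by
    intro g h hg hh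
    rw [Subgroup.coe_mul, Perm.mul_apply, hh, hg]
  -- ver
  set ver : 𝒢 → Fin 5 → 𝒢 :=
    fun g j => (σ j)⁻¹ * g * σ (((g : Perm (Fin 5)))⁻¹ j) with hverdef
  have hverfix : ∀ g j, ((ver g j : 𝒢) : Perm (Fin 5)) 0 = 0 := by
    intro g j
    show (((σ j)⁻¹ * g * σ (((g : Perm (Fin 5)))⁻¹ j) : 𝒢) : Perm (Fin 5)) 0 = 0
    rw [Subgroup.coe_mul, Subgroup.coe_mul, Perm.mul_apply, Perm.mul_apply, hσ,
      Perm.apply_inv_self, Subgroup.coe_inv]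
    exact hσinv j
  -- key formula
  have hkey : ∀ (g : 𝒢) (j : Fin 5),
      f g j = x ((g : Perm (Fin 5))⁻¹ j) + x j + χ (ver g j) := by
    intro g j
    have A := congrFun (hcoc g (σ ((g : Perm (Fin 5))⁻¹ j))) j
    simp only [Pi.add_apply] at A
    have B : g * σ ((g : Perm (Fin 5))⁻¹ j) = σ j * ver g j := by
      rw [hverdef]
      group
    have C := congrFun (hcoc (σ j) (ver g j)) j
    simp only [Pi.add_apply] at C
    rw [hσinv j] at C
    rw [B] at A
    rw [C] at A
    -- A : x j + χ (ver g j) = f g j + x (g⁻¹ j)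
    have : f g j + x ((g : Perm (Fin 5))⁻¹ j) = x j + χ (ver g j) := A.symm
    calc f g j = f g j + (x ((g : Perm (Fin 5))⁻¹ j) + x ((g : Perm (Fin 5))⁻¹ j)) := by
          rw [h2, add_zero]
      _ = (f g j + x ((g : Perm (Fin 5))⁻¹ j)) + x ((g : Perm (Fin 5))⁻¹ j) := by ring
      _ = (x j + χ (ver g j)) + x ((g : Perm (Fin 5))⁻¹ j) := by rw [this]
      _ = x ((g : Perm (Fin 5))⁻¹ j) + x j + χ (ver g j) := by ring
  -- sum relation
  have hGmem : ∀ g : 𝒢, ∑ j, f g j = 0 := fun g => hmem g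
  have hsum : ∀ g : 𝒢, ∑ j, χ (ver g j) = 0 := by
    intro g
    have e1 : ∑ j, f g j =
        ∑ j, (x ((g : Perm (Fin 5))⁻¹ j) + x j + χ (ver g j)) :=
      Finset.sum_congr rfl (fun j _ => hkey g j)
    rw [hGmem g] at e1
    rw [Finset.sum_add_distrib, Finset.sum_add_distrib] at e1
    have hre : ∑ j, x ((g : Perm (Fin 5))⁻¹ j) = ∑ j, x j :=
      Equiv.sum_comp ((g : Perm (Fin 5))⁻¹) x
    rw [hre] at e1
    rw [h2] at e1
    rw [zero_add] at e1
    exact e1.symm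
  -- telescope
  have htel : ∀ (g₁ g₂ : 𝒢) (j : Fin 5),
      χ (ver (g₁ * g₂) j) = χ (ver g₁ j) + χ (ver g₂ ((g₁ : Perm (Fin 5))⁻¹ j)) := by
    intro g₁ g₂ j
    have hidx : (((g₁ * g₂ : 𝒢) : Perm (Fin 5)))⁻¹ j
        = (g₂ : Perm (Fin 5))⁻¹ ((g₁ : Perm (Fin 5))⁻¹ j) := by
      rw [Subgroup.coe_mul, mul_inv_rev, Perm.mul_apply]
    have hv : ver (g₁ * g₂) j = ver g₁ j * ver g₂ ((g₁ : Perm (Fin 5))⁻¹ j) := by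
      rw [hverdef]
      simp only []
      rw [hidx]
      group
    rw [hv]
    exact hadd _ _ (hverfix g₁ j)
  have hχ1 : χ (1 : 𝒢) = 0 := by rw [hχdef]; simp [hf1]
  have hver1 : ∀ j, ver (1 : 𝒢) j = 1 := by
    intro j
    rw [hverdef]
    simp only []
    have : (((1 : 𝒢) : Perm (Fin 5)))⁻¹ j = j := by simp
    rw [this]
    group
  have hver0 : ∀ g : 𝒢, (g : Perm (Fin 5)) 0 = 0 → ver g 0 = g := by
    intro g hg
    rw [hverdef]
    simp only []
    have : ((g : Perm (Fin 5)))⁻¹ 0 = 0 := by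
      conv_lhs => rw [← hg]
      rw [Perm.inv_apply_self]
    rw [this, hσzero]
    group
  have hverfixpt : ∀ (g : 𝒢) (j : Fin 5), (g : Perm (Fin 5)) j = j →
      ver g j = (σ j)⁻¹ * g * σ j := by
    intro g j hj
    rw [hverdef]
    simp only []
    have : ((g : Perm (Fin 5)))⁻¹ j = j := by
      conv_lhs => rw [← hj]
      rw [Perm.inv_apply_self]
    rw [this]
  -- pair cancellation for involutions
  have hpair : ∀ g : 𝒢, g * g = 1 → ∀ q : Fin 5,
      χ (ver g ((g : Perm (Fin 5)) q)) + χ (ver g q) = 0 := by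
    intro g hg q
    have t := htel g g ((g : Perm (Fin 5)) q)
    rw [hg, hver1, hχ1, Perm.inv_apply_self] at t
    exact t.symm
  have hcancel : ∀ a b : ZMod 2, a + b = 0 → a = b := by decide
  -- the crucial vanishing of χ on the stabilizer of 0
  have hχ0 : ∀ h : 𝒢, (h : Perm (Fin 5)) 0 = 0 → χ h = 0 := by
    intro h hh0
    rcases D1' (h : Perm (Fin 5)) hh0 with h3 | hsq' | ⟨h4, hn2⟩
    · -- h³ = 1
      have hh3 : (h * h) * h = 1 := by
        apply Subtype.ext
        rw [Subgroup.coe_mul, Subgroup.coe_mul, OneMemClass.coe_one]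
        rw [show ((h : Perm (Fin 5)))^3 = (h : Perm (Fin 5)) * (h : Perm (Fin 5)) * (h : Perm (Fin 5))
          by rw [pow_succ, pow_succ, pow_one]] at h3
        exact h3
      have e1 : χ ((h * h) * h) = χ h + χ h + χ h := by
        rw [hadd (h*h) h (hmulfix h h hh0 hh0), hadd h h hh0]
      rw [hh3, hχ1] at e1
      linear_combination -e1 - h2 (χ h)
    · -- h² = 1
      have hsq : h * h = 1 := by
        apply Subtype.ext
        rw [Subgroup.coe_mul, OneMemClass.coe_one]
        rw [show ((h : Perm (Fin 5)))^2 = (h : Perm (Fin 5)) * (h : Perm (Fin 5))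
          by rw [pow_succ, pow_one]] at hsq'
        exact hsq'
      by_cases hone : h = 1
      · rw [hone]; exact hχ1
      have hne : (h : Perm (Fin 5)) ≠ 1 := by
        intro hc
        exact hone (Subtype.ext (by rw [hc, OneMemClass.coe_one]))
      rcases D2' _ hh0 hsq' hne with
        ⟨p, a, hp0, hhp0, ha0, hha0, hphp, haha, hap, hahp, hhap, hhahp⟩ |
        ⟨i, j, k, l, hi0, hj0, hk0, hl0, hij, hik, hil, hjk, hjl, hkl, hswap, hk, hl⟩
      · -- double transposition
        have hS := hsum h
        rw [S5d (fun m => χ (ver h m)) 0 p ((h : Perm (Fin 5)) p) a ((h : Perm (Fin 5)) a)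
          (Ne.symm hp0) (Ne.symm hhp0) (Ne.symm ha0) (Ne.symm hha0)
          hphp (Ne.symm hap) (Ne.symm hhap) (Ne.symm hahp) (Ne.symm hhahp) haha] at hS
        rw [hver0 h hh0] at hS
        have P1 := hpair h hsq p
        have P2 := hpair h hsq a
        linear_combination hS - P1 - P2
      · -- transposition: 𝒢 = ⊤
        have htop : 𝒢 = ⊤ := by
          apply Equiv.Perm.subgroup_eq_top_of_swap_mem (τ := (h : Perm (Fin 5)))
          · rw [Fintype.card_fin]; norm_num
          · rw [Fintype.card_fin]
            have := div5 𝒢 htrans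
            rwa [Nat.card_eq_fintype_card] at this
          · exact h.2
          · exact ⟨i, j, hij, hswap⟩
        have hmemtop : ∀ π : Perm (Fin 5), π ∈ 𝒢 := fun π => htop ▸ Subgroup.mem_top π
        set χ' : Perm (Fin 5) → ZMod 2 := fun π => χ ⟨π, hmemtop π⟩ with hχ'def
        have hχ'h : ∀ g : 𝒢, χ' (g : Perm (Fin 5)) = χ g := fun g => congrArg χ (Subtype.ext rfl)
        have hχ'1 : χ' 1 = 0 := by
          rw [show (1 : Perm (Fin 5)) = ((1 : 𝒢) : Perm (Fin 5)) from (OneMemClass.coe_one 𝒢).symm,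
            hχ'h]
          exact hχ1
        have hadd' : ∀ π ρ : Perm (Fin 5), π 0 = 0 → χ' (π * ρ) = χ' π + χ' ρ := by
          intro π ρ hπ
          calc χ' (π * ρ) = χ ((⟨π, hmemtop π⟩ : 𝒢) * ⟨ρ, hmemtop ρ⟩) :=
                congrArg χ (Subtype.ext rfl)
            _ = χ' π + χ' ρ := hadd _ _ hπ
        have hinv' : ∀ π : Perm (Fin 5), π 0 = 0 → χ' π⁻¹ = χ' π := by
          intro π hπ
          have h0 : χ' (π * π⁻¹) = χ' π + χ' π⁻¹ := hadd' π π⁻¹ hπ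
          rw [show π * π⁻¹ = 1 by group, hχ'1] at h0
          exact (hcancel _ _ h0.symm).symm
        have hstep : ∀ a b d : Fin 5, a ≠ 0 → b ≠ 0 → d ≠ 0 → a ≠ b → a ≠ d → b ≠ d →
            χ' (Equiv.swap a d) = χ' (Equiv.swap b d) := by
          intro a b d ha hb hd hab had hbd
          have hconj : Equiv.swap a b * Equiv.swap a d * (Equiv.swap a b)⁻¹
              = Equiv.swap b d := by
            rw [← swap_apply_apply, swap_apply_left,
              swap_apply_of_ne_of_ne (Ne.symm had) (Ne.symm hbd)]
          have hfab : Equiv.swap a b 0 = 0 :=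
            swap_apply_of_ne_of_ne (Ne.symm ha) (Ne.symm hb)
          have e1 : χ' (Equiv.swap a b * Equiv.swap a d * (Equiv.swap a b)⁻¹)
              = (χ' (Equiv.swap a b) + χ' (Equiv.swap a d)) + χ' ((Equiv.swap a b)⁻¹) := by
            rw [hadd' _ _ (by
              rw [Perm.mul_apply, swap_apply_of_ne_of_ne (Ne.symm ha) (Ne.symm hd), hfab]),
              hadd' _ _ hfab]
          rw [hconj, hinv' _ hfab] at e1
          linear_combination -e1 - h2 (χ' (Equiv.swap a b))
        have hconst : ∀ a b a' b' : Fin 5, a ≠ 0 → b ≠ 0 → a' ≠ 0 → b' ≠ 0 → a ≠ b → a' ≠ b' →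
            χ' (Equiv.swap a b) = χ' (Equiv.swap a' b') := by
          intro a b a' b' ha hb ha' hb' hab ha'b'
          by_cases h1 : b = b'
          · subst h1
            by_cases hA : a = a'
            · subst hA; rfl
            · exact hstep a a' b ha ha' hb hA hab ha'b'
          · by_cases hA : a = a'
            · subst hA
              rw [Equiv.swap_comm a b, Equiv.swap_comm a b']
              exact hstep b b' a hb hb' ha h1 (Ne.symm hab) (Ne.symm ha'b')
            · by_cases h3 : a = b'
              · subst h3
                by_cases h4 : a' = b
                · subst h4; rw [Equiv.swap_comm]
                · rw [Equiv.swap_comm a b]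
                  exact hstep b a' a hb ha' ha (Ne.symm h4) (Ne.symm hab) (fun e => hA e.symm)
              · by_cases h4 : a' = b
                · subst h4
                  have := hstep a b' a' ha hb' ha' h3 hab (Ne.symm h1)
                  rw [this, Equiv.swap_comm]
                · have s1 : χ' (Equiv.swap a b) = χ' (Equiv.swap a' b) :=
                    hstep a a' b ha ha' hb hA hab h4
                  have s2 : χ' (Equiv.swap a' b) = χ' (Equiv.swap a' b') := by
                    rw [Equiv.swap_comm a' b, Equiv.swap_comm a' b']
                    exact hstep b b' a' hb hb' ha' h1 (Ne.symm h4) (Ne.symm ha'b')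
                  rw [s1, s2]
        -- the relation
        have hS := hsum h
        rw [S5d (fun m => χ (ver h m)) 0 i j k l (Ne.symm hi0) (Ne.symm hj0) (Ne.symm hk0)
          (Ne.symm hl0) hij hik hil hjk hjl hkl] at hS
        rw [hver0 h hh0] at hS
        have hhi : (h : Perm (Fin 5)) i = j := by rw [hswap]; exact swap_apply_left i j
        have P := hpair h hsq i
        rw [hhi] at P
        have hvh : χ h = χ' (Equiv.swap i j) := by rw [← hχ'h h, hswap]
        have hfixconj : ∀ m : Fin 5, (h : Perm (Fin 5)) m = m → m ≠ i → m ≠ j →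
            χ (ver h m) = χ h := by
          intro m hm hmi hmj
          have hver := hverfixpt h m hm
          have hcoe : ((ver h m : 𝒢) : Perm (Fin 5))
              = Equiv.swap (((σ m : Perm (Fin 5)))⁻¹ i) (((σ m : Perm (Fin 5)))⁻¹ j) := by
            rw [hver, Subgroup.coe_mul, Subgroup.coe_mul, Subgroup.coe_inv, hswap,
              swap_apply_apply, inv_inv]
          have hi' : ((σ m : Perm (Fin 5)))⁻¹ i ≠ 0 := by
            intro e
            have : i = (σ m : Perm (Fin 5)) 0 := by rw [← e, Perm.apply_inv_self]
            rw [hσ m] at this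
            exact hmi this.symm
          have hj' : ((σ m : Perm (Fin 5)))⁻¹ j ≠ 0 := by
            intro e
            have : j = (σ m : Perm (Fin 5)) 0 := by rw [← e, Perm.apply_inv_self]
            rw [hσ m] at this
            exact hmj this.symm
          have hij' : ((σ m : Perm (Fin 5)))⁻¹ i ≠ ((σ m : Perm (Fin 5)))⁻¹ j :=
            fun e => hij (((σ m : Perm (Fin 5)))⁻¹.injective e)
          rw [← hχ'h (ver h m), hcoe, hconst _ _ i j hi' hj' hi0 hj0 hij' hij, ← hvh]
        have ek := hfixconj k hk (Ne.symm hik) (Ne.symm hjk)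
        have el := hfixconj l hl (Ne.symm hil) (Ne.symm hjl)
        rw [ek, el] at hS
        linear_combination hS - P - h2 (χ h)
    · -- order 4
      obtain ⟨p, hp0, h1p0, h2p0, h3p0, d01, d02, d03, d12, d13, d23⟩ :=
        D3' _ hh0 h4 hn2
      have hS := hsum h
      rw [S5d (fun m => χ (ver h m)) 0 p ((h : Perm (Fin 5)) p)
        ((h : Perm (Fin 5)) ((h : Perm (Fin 5)) p))
        ((h : Perm (Fin 5)) ((h : Perm (Fin 5)) ((h : Perm (Fin 5)) p)))
        (Ne.symm hp0) (Ne.symm h1p0) (Ne.symm h2p0) (Ne.symm h3p0) d01 d02 d03 d12 d13 d23] at hS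
      rw [hver0 h hh0] at hS
      set q : Fin 5 := (h : Perm (Fin 5)) ((h : Perm (Fin 5)) ((h : Perm (Fin 5)) p)) with hqdef
      have hh4 : ((h * h) * h) * h = 1 := by
        apply Subtype.ext
        rw [Subgroup.coe_mul, Subgroup.coe_mul, Subgroup.coe_mul, OneMemClass.coe_one]
        rw [show ((h : Perm (Fin 5)))^4
          = (h : Perm (Fin 5)) * (h : Perm (Fin 5)) * (h : Perm (Fin 5)) * (h : Perm (Fin 5))
          by rw [pow_succ, pow_succ, pow_succ, pow_one]] at h4
        exact h4
      have i1 : ((h : Perm (Fin 5)))⁻¹ q = (h : Perm (Fin 5)) ((h : Perm (Fin 5)) p) :=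
        Perm.inv_apply_self _ _
      have t1 := htel h h q
      rw [i1] at t1
      have i2 : (((h * h : 𝒢) : Perm (Fin 5)))⁻¹ q = (h : Perm (Fin 5)) p := by
        rw [Subgroup.coe_mul, mul_inv_rev, Perm.mul_apply, i1, Perm.inv_apply_self]
      have t2 := htel (h * h) h q
      rw [i2] at t2
      have i3 : ((((h * h) * h : 𝒢) : Perm (Fin 5)))⁻¹ q = p := by
        rw [Subgroup.coe_mul, mul_inv_rev, Perm.mul_apply, i2, Perm.inv_apply_self]
      have t3 := htel ((h * h) * h) h q
      rw [i3, hh4, hver1, hχ1] at t3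
      linear_combination hS + t1 + t2 - t3 - h2 (χ (ver h p)) - h2 (χ (ver ((h*h)*h) q))
  -- conclusion
  have hxform : ∀ (g : 𝒢) (j : Fin 5), f g j = x ((g : Perm (Fin 5))⁻¹ j) + x j := by
    intro g j
    rw [hkey g j, hχ0 (ver g j) (hverfix g j), add_zero]
  set s : ZMod 2 := ∑ i, x i with hsdef
  refine ⟨fun j => x j + s, ?_, ?_⟩
  · show ∑ i, (x i + s) = 0
    rw [Finset.sum_add_distrib, Finset.sum_const]
    simp only [Finset.card_univ, Fintype.card_fin]
    have h51 : ((5 : ℕ) : ZMod 2) = 1 := by decide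
    rw [show (5 : ℕ) • s = s by rw [nsmul_eq_mul, h51, one_mul], ← hsdef]
    exact h2 s
  · intro g
    funext j
    simp only [Pi.sub_apply]
    rw [hsub2, hxform g j]
    linear_combination - h2 s
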